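/- Let n ≥ 3. In VB_n the following identities hold for all m ∈ ℤ and ε ∈ {0,1}: f_{m,0} f_{m,1} = 1; f_{m,ε}³ = 1; and, when n ≥ 4: g_{m,l}² = 1 for all 3 ≤ l ≤ n−1; (f_{m,ε} g_{m,3})³ = 1; (f_{m,ε} g_{m,k})² = 1 for all 4 ≤ k ≤ n−1; (g_{m,i} g_{m,i+1})³ = 1 for all 3 ≤ i ≤ n−2; and (g_{m,i} g_{m,j})² = 1 for all 3 ≤ i < j ≤ n−1 with j > i+1. -/
import Mathlib


/-!
Common setup: the virtual braid group `VB n` and the welded braid group `WB n`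
as presented groups, together with the distinguished elements of their
commutator subgroups used in the paper
"Commutator subgroups of virtual and welded braid groups".

Generators: for `i : Fin (n-1)`, `Sum.inl i` represents σ_{i+1} and
`Sum.inr i` represents ρ_{i+1}.
-/

/-- The generating set of `VB n` (and `WB n`). -/
abbrev VBGen (n : ℕ) := (Fin (n - 1)) ⊕ (Fin (n - 1))

/-- The free group letter σ_i, for `1 ≤ i ≤ n-1` (junk value `1` otherwise). -/
def fσ (n i : ℕ) : FreeGroup (VBGen n) :=
  if h : 1 ≤ i ∧ i - 1 < n - 1 then FreeGroup.of (Sum.inl ⟨i - 1, h.2⟩) else 1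

/-- The free group letter ρ_i, for `1 ≤ i ≤ n-1` (junk value `1` otherwise). -/
def fρ (n i : ℕ) : FreeGroup (VBGen n) :=
  if h : 1 ≤ i ∧ i - 1 < n - 1 then FreeGroup.of (Sum.inr ⟨i - 1, h.2⟩) else 1

/-- The defining relators of the virtual braid group `VB n`. -/
def vbRels (n : ℕ) : Set (FreeGroup (VBGen n)) :=
  {r | ∃ i j, 1 ≤ i ∧ i + 2 ≤ j ∧ j ≤ n - 1 ∧
      (r = fσ n i * fσ n j * (fσ n i)⁻¹ * (fσ n j)⁻¹ ∨
       r = fρ n i * fρ n j * (fρ n i)⁻¹ * (fρ n j)⁻¹ ∨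
       r = fσ n i * fρ n j * (fσ n i)⁻¹ * (fρ n j)⁻¹ ∨
       r = fσ n j * fρ n i * (fσ n j)⁻¹ * (fρ n i)⁻¹)} ∪
  {r | ∃ i, 1 ≤ i ∧ i + 1 ≤ n - 1 ∧
      (r = fσ n i * fσ n (i+1) * fσ n i * (fσ n (i+1))⁻¹ * (fσ n i)⁻¹ * (fσ n (i+1))⁻¹ ∨
       r = fρ n i * fρ n (i+1) * fρ n i * (fρ n (i+1))⁻¹ * (fρ n i)⁻¹ * (fρ n (i+1))⁻¹ ∨
       r = fρ n i * fρ n (i+1) * fσ n i * (fρ n (i+1))⁻¹ * (fρ n i)⁻¹ * (fσ n (i+1))⁻¹)} ∪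
  {r | ∃ i, 1 ≤ i ∧ i ≤ n - 1 ∧ r = fρ n i * fρ n i}

/-- The virtual braid group on `n` strands. -/
abbrev VB (n : ℕ) := PresentedGroup (vbRels n)

/-- The generator σ_i of `VB n`. -/
def vσ (n i : ℕ) : VB n := PresentedGroup.mk (vbRels n) (fσ n i)

/-- The generator ρ_i of `VB n`. -/
def vρ (n i : ℕ) : VB n := PresentedGroup.mk (vbRels n) (fρ n i)

/-- a_m = σ_1^m (ρ_1 σ_1 ρ_1 σ_1⁻¹) σ_1^{-m}. -/
def va (n : ℕ) (m : ℤ) : VB n :=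
  (vσ n 1) ^ m * (vρ n 1 * vσ n 1 * vρ n 1 * (vσ n 1)⁻¹) * (vσ n 1) ^ (-m)

/-- b_{m,ε} = σ_1^m (ρ_1^ε σ_2 ρ_1^ε σ_1⁻¹) σ_1^{-m}. -/
def vb (n : ℕ) (m : ℤ) (ε : ℕ) : VB n :=
  (vσ n 1) ^ m * ((vρ n 1) ^ ε * vσ n 2 * (vρ n 1) ^ ε * (vσ n 1)⁻¹) * (vσ n 1) ^ (-m)

/-- c_l = σ_l σ_1⁻¹. -/
def vc (n l : ℕ) : VB n := vσ n l * (vσ n 1)⁻¹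

/-- f_{m,ε} = σ_1^m (ρ_1^ε ρ_2 ρ_1^{ε+1}) σ_1^{-m}; `f_m` is `vf n m 0`. -/
def vf (n : ℕ) (m : ℤ) (ε : ℕ) : VB n :=
  (vσ n 1) ^ m * ((vρ n 1) ^ ε * vρ n 2 * (vρ n 1) ^ (ε + 1)) * (vσ n 1) ^ (-m)

/-- g_{m,l} = σ_1^m (ρ_l ρ_1) σ_1^{-m}. -/
def vg (n : ℕ) (m : ℤ) (l : ℕ) : VB n :=
  (vσ n 1) ^ m * (vρ n l * vρ n 1) * (vσ n 1) ^ (-m)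

/-- The additional relators ρ_i σ_{i+1} σ_i (ρ_{i+1})⁻¹ σ_i⁻¹ σ_{i+1}⁻¹ of the
welded braid group. -/
def wbExtraRels (n : ℕ) : Set (FreeGroup (VBGen n)) :=
  {r | ∃ i, 1 ≤ i ∧ i + 1 ≤ n - 1 ∧
      r = fρ n i * fσ n (i+1) * fσ n i * (fρ n (i+1))⁻¹ * (fσ n i)⁻¹ * (fσ n (i+1))⁻¹}

/-- The defining relators of the welded braid group `WB n`. -/
def wbRels (n : ℕ) : Set (FreeGroup (VBGen n)) := vbRels n ∪ wbExtraRels n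

/-- The welded braid group on `n` strands. -/
abbrev WB (n : ℕ) := PresentedGroup (wbRels n)

/-- The generator σ_i of `WB n`. -/
def wσ (n i : ℕ) : WB n := PresentedGroup.mk (wbRels n) (fσ n i)

/-- The generator ρ_i of `WB n`. -/
def wρ (n i : ℕ) : WB n := PresentedGroup.mk (wbRels n) (fρ n i)

/-- a_m in `WB n`. -/
def wa (n : ℕ) (m : ℤ) : WB n :=
  (wσ n 1) ^ m * (wρ n 1 * wσ n 1 * wρ n 1 * (wσ n 1)⁻¹) * (wσ n 1) ^ (-m)

/-- f_{m,ε} in `WB n`; `f_m` is `wf n m 0`. -/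
def wf (n : ℕ) (m : ℤ) (ε : ℕ) : WB n :=
  (wσ n 1) ^ m * ((wρ n 1) ^ ε * wρ n 2 * (wρ n 1) ^ (ε + 1)) * (wσ n 1) ^ (-m)

/-- c_l in `WB n`. -/
def wc (n l : ℕ) : WB n := wσ n l * (wσ n 1)⁻¹

/-- g_{m,l} in `WB n`. -/
def wg (n : ℕ) (m : ℤ) (l : ℕ) : WB n :=
  (wσ n 1) ^ m * (wρ n l * wρ n 1) * (wσ n 1) ^ (-m)

section GroupAux

variable {G : Type*} [Group G]

private lemma conj_mul' (s : G) (m : ℤ) (x y : G) :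
    (s ^ m * x * s ^ (-m)) * (s ^ m * y * s ^ (-m)) = s ^ m * (x * y) * s ^ (-m) := by
  group

private lemma conj_pow_nat (s : G) (m : ℤ) (x : G) (k : ℕ) :
    (s ^ m * x * s ^ (-m)) ^ k = s ^ m * x ^ k * s ^ (-m) := by
  have h : s ^ m * x * s ^ (-m) = s ^ m * x * (s ^ m)⁻¹ := by group
  rw [h, conj_pow]
  group

private lemma conj_eq_one (s : G) (m : ℤ) {x : G} (hx : x = 1) :
    s ^ m * x * s ^ (-m) = 1 := by
  rw [hx]; group

private lemma invol_pow3 {a b : G} (ha : a * a = 1) (hb : b * b = 1)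
    (hbr : a * b * a = b * a * b) : (a * b) ^ 3 = 1 := by
  rw [pow_succ, pow_succ, pow_one,
    show a * b * (a * b) * (a * b) = a * (b * a * b) * (a * b) from by group, ← hbr,
    show a * (a * b * a) * (a * b) = a * a * b * (a * a * b) from by group,
    ha, one_mul, hb]

private lemma invol_pow3' {a b : G} (ha : a * a = 1) (hb : b * b = 1)
    (h : (a * b) ^ 3 = 1) : (b * a) ^ 3 = 1 := by
  rw [show b * a = (a * b)⁻¹ from by
      rw [mul_inv_rev, inv_eq_of_mul_eq_one_right ha, inv_eq_of_mul_eq_one_right hb],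
    inv_pow, h, inv_one]

private lemma comm_invol_sq {a b : G} (ha : a * a = 1) (hb : b * b = 1)
    (h : a * b = b * a) : (a * b) ^ 2 = 1 := by
  rw [pow_two, show a * b * (a * b) = a * (b * a) * b from by group, ← h,
    show a * (a * b) * b = a * a * (b * b) from by group, ha, hb, one_mul]

private lemma invol_conj_pow {a w : G} (ha : a * a = 1) (k : ℕ) (hw : w ^ k = 1) :
    (a * w * a) ^ k = 1 := by
  have hinv : a⁻¹ = a := inv_eq_of_mul_eq_one_right ha
  rw [show a * w * a = a * w * a⁻¹ from by rw [hinv], conj_pow, hw, mul_one,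
    mul_inv_cancel]

end GroupAux

section VBAux

private lemma mk_rel {n : ℕ} {r : FreeGroup (VBGen n)} (h : r ∈ vbRels n) :
    PresentedGroup.mk (vbRels n) r = 1 :=
  (QuotientGroup.eq_one_iff r).mpr (Subgroup.subset_normalClosure h)

private lemma rho_sq (n i : ℕ) (hi1 : 1 ≤ i) (hi2 : i ≤ n - 1) :
    vρ n i * vρ n i = 1 := by
  have h := mk_rel (n := n) (Set.mem_union_right _ ⟨i, hi1, hi2, rfl⟩)
  rw [map_mul] at h
  exact h

private lemma rho_comm (n i j : ℕ) (hi : 1 ≤ i) (hij : i + 2 ≤ j) (hj : j ≤ n - 1) :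
    vρ n i * vρ n j = vρ n j * vρ n i := by
  have h := mk_rel (n := n) (Set.mem_union_left _ (Set.mem_union_left _
    ⟨i, j, hi, hij, hj, Or.inr (Or.inl rfl)⟩))
  simp only [map_mul, map_inv] at h
  exact commutatorElement_eq_one_iff_mul_comm.mp h

private lemma rho_braid (n i : ℕ) (hi : 1 ≤ i) (hi2 : i + 1 ≤ n - 1) :
    vρ n i * vρ n (i+1) * vρ n i = vρ n (i+1) * vρ n i * vρ n (i+1) := by
  have h := mk_rel (n := n) (Set.mem_union_left _ (Set.mem_union_right _
    ⟨i, hi, hi2, Or.inr (Or.inl rfl)⟩))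
  simp only [map_mul, map_inv] at h
  have h' : vρ n i * vρ n (i+1) * vρ n i * (vρ n (i+1))⁻¹ * (vρ n i)⁻¹ * (vρ n (i+1))⁻¹ = 1 := h
  have key : vρ n i * vρ n (i+1) * vρ n i =
      (vρ n i * vρ n (i+1) * vρ n i * (vρ n (i+1))⁻¹ * (vρ n i)⁻¹ * (vρ n (i+1))⁻¹) *
        (vρ n (i+1) * vρ n i * vρ n (i+1)) := by group
  rw [key, h', one_mul]

end VBAux


/-- torsion relations among the `f_{m,ε}` and `g_{m,l}` in `VB_n`,
`n ≥ 3`. -/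
theorem VB_torsion_relations (n : ℕ) (hn : 3 ≤ n) :
    (∀ m : ℤ, vf n m 0 * vf n m 1 = 1) ∧
    (∀ m : ℤ, ∀ ε : ℕ, ε ≤ 1 → (vf n m ε) ^ 3 = 1) ∧
    (4 ≤ n →
      (∀ m : ℤ, ∀ l : ℕ, 3 ≤ l → l ≤ n - 1 → (vg n m l) ^ 2 = 1) ∧
      (∀ m : ℤ, ∀ ε : ℕ, ε ≤ 1 → (vf n m ε * vg n m 3) ^ 3 = 1) ∧
      (∀ m : ℤ, ∀ ε : ℕ, ε ≤ 1 → ∀ k : ℕ, 4 ≤ k → k ≤ n - 1 →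
        (vf n m ε * vg n m k) ^ 2 = 1) ∧
      (∀ m : ℤ, ∀ i : ℕ, 3 ≤ i → i + 1 ≤ n - 1 →
        (vg n m i * vg n m (i+1)) ^ 3 = 1) ∧
      (∀ m : ℤ, ∀ i j : ℕ, 3 ≤ i → i + 1 < j → j ≤ n - 1 →
        (vg n m i * vg n m j) ^ 2 = 1)) := by
  have h1 : vρ n 1 * vρ n 1 = 1 := rho_sq n 1 (by omega) (by omega)
  have h2 : vρ n 2 * vρ n 2 = 1 := rho_sq n 2 (by omega) (by omega)
  have hbr12 : vρ n 1 * vρ n 2 * vρ n 1 = vρ n 2 * vρ n 1 * vρ n 2 :=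
    rho_braid n 1 (by omega) (by omega)
  have h12c : (vρ n 1 * vρ n 2) ^ 3 = 1 := invol_pow3 h1 h2 hbr12
  have h21c : (vρ n 2 * vρ n 1) ^ 3 = 1 := invol_pow3' h1 h2 h12c
  refine ⟨?_, ?_, ?_⟩
  · intro m
    unfold vf
    rw [conj_mul']
    apply conj_eq_one
    simp only [pow_succ, pow_zero, pow_one, one_mul]
    rw [h1, mul_one,
      show vρ n 2 * vρ n 1 * (vρ n 1 * vρ n 2) = vρ n 2 * (vρ n 1 * vρ n 1) * vρ n 2
        from by group, h1, mul_one, h2]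
  · intro m ε hε
    interval_cases ε
    · unfold vf
      rw [conj_pow_nat]
      apply conj_eq_one
      rw [pow_zero, one_mul, zero_add, pow_one]
      exact h21c
    · unfold vf
      rw [conj_pow_nat]
      apply conj_eq_one
      rw [show (vρ n 1)^1 * vρ n 2 * (vρ n 1)^(1+1) = vρ n 1 * vρ n 2 from by
          rw [pow_one, pow_succ, pow_one, mul_assoc, h1, mul_one]]
      exact h12c
  · intro h4
    have h3 : vρ n 3 * vρ n 3 = 1 := rho_sq n 3 (by omega) (by omega)
    have hc13 : vρ n 1 * vρ n 3 = vρ n 3 * vρ n 1 := rho_comm n 1 3 (by omega) (by omega) (by omega)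
    have hbr23 : vρ n 2 * vρ n 3 * vρ n 2 = vρ n 3 * vρ n 2 * vρ n 3 :=
      rho_braid n 2 (by omega) (by omega)
    have h23c : (vρ n 2 * vρ n 3) ^ 3 = 1 := invol_pow3 h2 h3 hbr23
    refine ⟨?_, ?_, ?_, ?_, ?_⟩
    · intro m l hl3 hln
      have hl : vρ n l * vρ n l = 1 := rho_sq n l (by omega) hln
      have hcl : vρ n 1 * vρ n l = vρ n l * vρ n 1 :=
        rho_comm n 1 l (by omega) (by omega) hln
      unfold vg
      rw [conj_pow_nat]
      apply conj_eq_one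
      exact comm_invol_sq hl h1 hcl.symm
    · intro m ε hε
      interval_cases ε
      · unfold vf vg
        rw [conj_mul', conj_pow_nat]
        apply conj_eq_one
        rw [pow_zero, one_mul, zero_add, pow_one,
          show vρ n 2 * vρ n 1 * (vρ n 3 * vρ n 1) = vρ n 2 * (vρ n 1 * vρ n 3) * vρ n 1
            from by group, hc13,
          show vρ n 2 * (vρ n 3 * vρ n 1) * vρ n 1 = vρ n 2 * vρ n 3 * (vρ n 1 * vρ n 1)
            from by group, h1, mul_one]
        exact h23c
      · unfold vf vg
        rw [conj_mul', conj_pow_nat]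
        apply conj_eq_one
        rw [show (vρ n 1)^1 * vρ n 2 * (vρ n 1)^(1+1) = vρ n 1 * vρ n 2 from by
          rw [pow_one, pow_succ, pow_one, mul_assoc, h1, mul_one],
          show vρ n 1 * vρ n 2 * (vρ n 3 * vρ n 1) = vρ n 1 * (vρ n 2 * vρ n 3) * vρ n 1
            from by group]
        exact invol_conj_pow h1 3 h23c
    · intro m ε hε k hk4 hkn
      have hk : vρ n k * vρ n k = 1 := rho_sq n k (by omega) hkn
      have hc1k : vρ n 1 * vρ n k = vρ n k * vρ n 1 :=
        rho_comm n 1 k (by omega) (by omega) hkn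
      have hc2k : vρ n 2 * vρ n k = vρ n k * vρ n 2 :=
        rho_comm n 2 k (by omega) (by omega) hkn
      have h2k : (vρ n 2 * vρ n k) ^ 2 = 1 := comm_invol_sq h2 hk hc2k
      interval_cases ε
      · unfold vf vg
        rw [conj_mul', conj_pow_nat]
        apply conj_eq_one
        rw [pow_zero, one_mul, zero_add, pow_one,
          show vρ n 2 * vρ n 1 * (vρ n k * vρ n 1) = vρ n 2 * (vρ n 1 * vρ n k) * vρ n 1
            from by group, hc1k,
          show vρ n 2 * (vρ n k * vρ n 1) * vρ n 1 = vρ n 2 * vρ n k * (vρ n 1 * vρ n 1)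
            from by group, h1, mul_one]
        exact h2k
      · unfold vf vg
        rw [conj_mul', conj_pow_nat]
        apply conj_eq_one
        rw [show (vρ n 1)^1 * vρ n 2 * (vρ n 1)^(1+1) = vρ n 1 * vρ n 2 from by
          rw [pow_one, pow_succ, pow_one, mul_assoc, h1, mul_one],
          show vρ n 1 * vρ n 2 * (vρ n k * vρ n 1) = vρ n 1 * (vρ n 2 * vρ n k) * vρ n 1
            from by group]
        exact invol_conj_pow h1 2 h2k
    · intro m i hi3 hin
      have hii : vρ n i * vρ n i = 1 := rho_sq n i (by omega) (by omega)
      have hii1 : vρ n (i+1) * vρ n (i+1) = 1 := rho_sq n (i+1) (by omega) hin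
      have hbri : vρ n i * vρ n (i+1) * vρ n i = vρ n (i+1) * vρ n i * vρ n (i+1) :=
        rho_braid n i (by omega) hin
      have hcube : (vρ n i * vρ n (i+1)) ^ 3 = 1 := invol_pow3 hii hii1 hbri
      have hc1 : vρ n 1 * vρ n (i+1) = vρ n (i+1) * vρ n 1 :=
        rho_comm n 1 (i+1) (by omega) (by omega) hin
      unfold vg
      rw [conj_mul', conj_pow_nat]
      apply conj_eq_one
      rw [show vρ n i * vρ n 1 * (vρ n (i+1) * vρ n 1)
            = vρ n i * (vρ n 1 * vρ n (i+1)) * vρ n 1 from by group, hc1,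
        show vρ n i * (vρ n (i+1) * vρ n 1) * vρ n 1
            = vρ n i * vρ n (i+1) * (vρ n 1 * vρ n 1) from by group, h1, mul_one]
      exact hcube
    · intro m i j hi3 hij hjn
      have hii : vρ n i * vρ n i = 1 := rho_sq n i (by omega) (by omega)
      have hjj : vρ n j * vρ n j = 1 := rho_sq n j (by omega) hjn
      have hcij : vρ n i * vρ n j = vρ n j * vρ n i :=
        rho_comm n i j (by omega) (by omega) hjn
      have hc1j : vρ n 1 * vρ n j = vρ n j * vρ n 1 :=
        rho_comm n 1 j (by omega) (by omega) hjn
      unfold vg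
      rw [conj_mul', conj_pow_nat]
      apply conj_eq_one
      rw [show vρ n i * vρ n 1 * (vρ n j * vρ n 1)
            = vρ n i * (vρ n 1 * vρ n j) * vρ n 1 from by group, hc1j,
        show vρ n i * (vρ n j * vρ n 1) * vρ n 1
            = vρ n i * vρ n j * (vρ n 1 * vρ n 1) from by group, h1, mul_one]
      exact comm_invol_sq hii hjj hcij
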